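/- Let G be a directed graph, X, Y disjoint nonempty vertex sets, and let S* be the unique minimum X–Y separator with inclusion-wise maximal reach from X. Then for every important X–Y separator S, R⁺(X, G\S*) ⊆ R⁺(X, G\S). -/

import Mathlib

variable {V : Type*}

/-- A single edge step in `G \ S`: an edge of `E` with both endpoints outside `S`. -/
def DStep (E : V → V → Prop) (S : Set V) (a b : V) : Prop :=
  E a b ∧ a ∉ S ∧ b ∉ S

/-- `b` is reachable from `a` by a directed path in `G \ S`. -/
def DReach (E : V → V → Prop) (S : Set V) (a b : V) : Prop :=
  Relation.ReflTransGen (DStep E S) a b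

/-- The set of vertices reachable from the set `X` in `G \ S`. -/
def RSet (E : V → V → Prop) (S X : Set V) : Set V :=
  {v | ∃ x ∈ X, DReach E S x v}

/-- `S` is an `X`–`Y` separator: disjoint from `X ∪ Y` and destroying all `X → Y` paths. -/
def IsSep (E : V → V → Prop) (X Y S : Set V) : Prop :=
  S ∩ (X ∪ Y) = ∅ ∧ ∀ x ∈ X, ∀ y ∈ Y, ¬ DReach E S x y

/-- `S` is an inclusion-wise minimal `X`–`Y` separator. -/
def IsMinSep (E : V → V → Prop) (X Y S : Set V) : Prop :=
  IsSep E X Y S ∧ ∀ S', S' ⊂ S → ¬ IsSep E X Y S'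

/-- `S` is an important `X`–`Y` separator: a minimal separator such that no separator of at
most the same size has a strictly larger set of vertices reachable from `X`. -/
def IsImpSep (E : V → V → Prop) (X Y S : Set V) : Prop :=
  IsMinSep E X Y S ∧
    ¬ ∃ S', IsSep E X Y S' ∧ S'.ncard ≤ S.ncard ∧ RSet E S X ⊂ RSet E S' X

/-- `S` is a (vertex) multiway cut of `(G, T)`. -/
def IsMWC (E : V → V → Prop) (T S : Set V) : Prop :=
  S ∩ T = ∅ ∧ ∀ t₁ ∈ T, ∀ t₂ ∈ T, t₁ ≠ t₂ → ¬ DReach E S t₁ t₂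

/-- The forward shadow of `S` with respect to `T`: vertices outside `S ∪ T` not reachable
from `T` in `G \ S`. -/
def fShadow (E : V → V → Prop) (T S : Set V) : Set V :=
  {v | v ∉ S ∧ v ∉ T ∧ ∀ t ∈ T, ¬ DReach E S t v}

/-- The reverse shadow of `S` with respect to `T`: vertices outside `S ∪ T` that cannot
reach `T` in `G \ S`. -/
def rShadow (E : V → V → Prop) (T S : Set V) : Set V :=
  {v | v ∉ S ∧ v ∉ T ∧ ∀ t ∈ T, ¬ DReach E S v t}

/-- The adjacency of `torso(G, C)`: an edge `(a, b)` whenever `a, b ∈ C` and `G` has a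
directed `a → b` path whose internal vertices all lie outside `C`. -/
def TorsoAdj (E : V → V → Prop) (C : Set V) (a b : V) : Prop :=
  a ∈ C ∧ b ∈ C ∧ ∃ w, E a w ∧ Relation.ReflTransGen (fun x y => x ∉ C ∧ E x y) w b

lemma mem_RSet_of_mem {E : V → V → Prop} {S X : Set V} {x : V} (hx : x ∈ X) :
    x ∈ RSet E S X :=
  ⟨x, hx, Relation.ReflTransGen.refl⟩

lemma RSet_closed {E : V → V → Prop} {S X : Set V} {v w : V}
    (hv : v ∈ RSet E S X) (h : DStep E S v w) : w ∈ RSet E S X := by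
  obtain ⟨x, hx, hr⟩ := hv
  exact ⟨x, hx, hr.tail h⟩

lemma RSet_not_mem_sep {E : V → V → Prop} {S X : Set V} (hXS : ∀ x ∈ X, x ∉ S) :
    ∀ v ∈ RSet E S X, v ∉ S := by
  rintro v ⟨x, hx, hr⟩
  induction hr with
  | refl => exact hXS x hx
  | tail _ h _ => exact h.2.2

lemma reach_confined {E : V → V → Prop} {S' A : Set V} {x v : V}
    (hA : ∀ a ∈ A, ∀ b, DStep E S' a b → b ∈ A) (hx : x ∈ A)
    (hr : DReach E S' x v) : v ∈ A := by
  induction hr with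
  | refl => exact hx
  | tail _ h ih => exact hA _ ih _ h

lemma RSet_mono_out {E : V → V → Prop} {S S' X : Set V}
    (h : ∀ a ∈ RSet E S X, a ∉ S') : RSet E S X ⊆ RSet E S' X := by
  rintro v ⟨x, hx, hr⟩
  induction hr with
  | refl => exact mem_RSet_of_mem hx
  | @tail b c hxb hbc ih =>
      exact RSet_closed ih ⟨hbc.1, h _ ⟨x, hx, hxb⟩, h _ ⟨x, hx, hxb.tail hbc⟩⟩

/-- Every important `X`–`Y` separator is "behind" the unique minimum
`X`–`Y` separator `S*` with inclusion-wise maximal reach: `R⁺(X, G∖S*) ⊆ R⁺(X, G∖S)`. -/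
theorem important_separator_behind_min_separator [Fintype V]
    (E : V → V → Prop) (X Y Sstar : Set V)
    (hsep : IsSep E X Y Sstar)
    (hmin : ∀ S, IsSep E X Y S → Sstar.ncard ≤ S.ncard)
    (hmax : ∀ S, IsSep E X Y S → S.ncard = Sstar.ncard → RSet E S X ⊆ RSet E Sstar X) :
    ∀ S, IsImpSep E X Y S → RSet E Sstar X ⊆ RSet E S X := by
  intro S himp
  obtain ⟨⟨hsepS, _⟩, hnotimp⟩ := himp
  set A := RSet E S X with hAdef
  set B := RSet E Sstar X with hBdef
  -- basic disjointness facts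
  have hSXY : ∀ v ∈ S, v ∉ X ∪ Y := by
    intro v hv hvXY
    exact absurd (Set.mem_inter hv hvXY) (by rw [hsepS.1]; exact Set.notMem_empty v)
  have hS'XY : ∀ v ∈ Sstar, v ∉ X ∪ Y := by
    intro v hv hvXY
    exact absurd (Set.mem_inter hv hvXY) (by rw [hsep.1]; exact Set.notMem_empty v)
  have hXS : ∀ x ∈ X, x ∉ S := fun x hx hxS => hSXY x hxS (Or.inl hx)
  have hXS' : ∀ x ∈ X, x ∉ Sstar := fun x hx hxS => hS'XY x hxS (Or.inl hx)
  have hAS : ∀ a ∈ A, a ∉ S := RSet_not_mem_sep hXS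
  have hBS' : ∀ a ∈ B, a ∉ Sstar := RSet_not_mem_sep hXS'
  have hYA : ∀ y ∈ Y, y ∉ A := by
    rintro y hy ⟨x, hx, hr⟩
    exact hsepS.2 x hx y hy hr
  have hYB : ∀ y ∈ Y, y ∉ B := by
    rintro y hy ⟨x, hx, hr⟩
    exact hsep.2 x hx y hy hr
  -- closure of A and B under steps
  have hclosA : ∀ a ∈ A, ∀ b, E a b → b ∉ S → b ∈ A := by
    intro a ha b hab hbS
    exact RSet_closed ha ⟨hab, hAS a ha, hbS⟩
  have hclosB : ∀ a ∈ B, ∀ b, E a b → b ∉ Sstar → b ∈ B := by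
    intro a ha b hab hbS
    exact RSet_closed ha ⟨hab, hBS' a ha, hbS⟩
  intro v hvB
  by_contra hvA
  -- the two combined separators
  set Sout := (S ∪ Sstar) \ (A ∪ B) with hSout
  set Sin := ((S ∩ B) ∪ (Sstar ∩ A)) ∪ (S ∩ Sstar) with hSin
  have hSinSub : Sin ⊆ S ∪ Sstar := by
    rintro w ((⟨h, _⟩ | ⟨h, _⟩) | ⟨h, _⟩)
    · exact Or.inl h
    · exact Or.inr h
    · exact Or.inl h
  -- Sin is a separator
  have hsepIn : IsSep E X Y Sin := by
    constructor
    · ext w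
      simp only [Set.mem_inter_iff, Set.mem_empty_iff_false, iff_false, not_and]
      intro hw hwXY
      rcases hSinSub hw with h | h
      · exact hSXY w h hwXY
      · exact hS'XY w h hwXY
    · intro x hx y hy hr
      have hconf : y ∈ A ∩ B := by
        refine reach_confined (A := A ∩ B) ?_ ⟨mem_RSet_of_mem hx, mem_RSet_of_mem hx⟩ hr
        rintro a ⟨haA, haB⟩ b ⟨hab, _, hbSin⟩
        have hbS : b ∉ S := by
          intro hbS
          have hbB : b ∉ B := fun hbB => hbSin (Or.inl (Or.inl ⟨hbS, hbB⟩))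
          have hbS' : b ∉ Sstar := fun h' => hbSin (Or.inr ⟨hbS, h'⟩)
          exact hbB (hclosB a haB b hab hbS')
        have hbA : b ∈ A := hclosA a haA b hab hbS
        have hbS' : b ∉ Sstar := fun h' => hbSin (Or.inl (Or.inr ⟨h', hbA⟩))
        exact ⟨hbA, hclosB a haB b hab hbS'⟩
      exact hYA y hy hconf.1
  -- Sout is a separator
  have hsepOut : IsSep E X Y Sout := by
    constructor
    · ext w
      simp only [Set.mem_inter_iff, Set.mem_empty_iff_false, iff_false, not_and]
      rintro ⟨hw, _⟩ hwXY
      rcases hw with h | h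
      · exact hSXY w h hwXY
      · exact hS'XY w h hwXY
    · intro x hx y hy hr
      have hconf : y ∈ A ∪ B := by
        refine reach_confined (A := A ∪ B) ?_ (Or.inl (mem_RSet_of_mem hx)) hr
        rintro a (haA | haB) b ⟨hab, _, hbSout⟩
        · by_cases hbS : b ∈ S
          · by_contra hbAB
            exact hbSout ⟨Or.inl hbS, hbAB⟩
          · exact Or.inl (hclosA a haA b hab hbS)
        · by_cases hbS : b ∈ Sstar
          · by_contra hbAB
            exact hbSout ⟨Or.inr hbS, hbAB⟩
          · exact Or.inr (hclosB a haB b hab hbS)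
      rcases hconf with h | h
      · exact hYA y hy h
      · exact hYB y hy h
  -- cardinality bookkeeping
  have hunion : Sout ∪ Sin = S ∪ Sstar := by
    apply Set.Subset.antisymm
    · rintro w (⟨hw, _⟩ | hw)
      · exact hw
      · exact hSinSub hw
    · rintro w (hw | hw)
      · by_cases hwB : w ∈ B
        · exact Or.inr (Or.inl (Or.inl ⟨hw, hwB⟩))
        · exact Or.inl ⟨Or.inl hw, by rintro (h | h); exacts [hAS w h hw, hwB h]⟩
      · by_cases hwA : w ∈ A
        · exact Or.inr (Or.inl (Or.inr ⟨hw, hwA⟩))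
        · exact Or.inl ⟨Or.inr hw, by rintro (h | h); exacts [hwA h, hBS' w h hw]⟩
  have hinter : Sout ∩ Sin = S ∩ Sstar := by
    apply Set.Subset.antisymm
    · rintro w ⟨⟨_, hwAB⟩, (⟨_, hwB⟩ | ⟨_, hwA⟩) | hw⟩
      · exact absurd (Or.inr hwB) hwAB
      · exact absurd (Or.inl hwA) hwAB
      · exact hw
    · rintro w ⟨hwS, hwS'⟩
      refine ⟨⟨Or.inl hwS, ?_⟩, Or.inr ⟨hwS, hwS'⟩⟩
      rintro (h | h)
      · exact hAS w h hwS
      · exact hBS' w h hwS'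
  have hcardsum : Sout.ncard + Sin.ncard = S.ncard + Sstar.ncard := by
    have h1 := Set.ncard_union_add_ncard_inter Sout Sin (Set.toFinite _) (Set.toFinite _)
    have h2 := Set.ncard_union_add_ncard_inter S Sstar (Set.toFinite _) (Set.toFinite _)
    rw [hunion, hinter] at h1
    omega
  have hSinBig : Sstar.ncard ≤ Sin.ncard := hmin Sin hsepIn
  have hcard : Sout.ncard ≤ S.ncard := by omega
  -- reach sets grow when passing to Sout
  have hAout : A ⊆ RSet E Sout X :=
    RSet_mono_out (fun a ha hout => hout.2 (Or.inl ha))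
  have hBout : B ⊆ RSet E Sout X :=
    RSet_mono_out (fun a ha hout => hout.2 (Or.inr ha))
  -- contradiction with importance of S
  refine hnotimp ⟨Sout, hsepOut, hcard, ?_⟩
  rw [Set.ssubset_iff_subset_ne]
  refine ⟨hAout, fun heq => hvA ?_⟩
  show v ∈ A
  rw [heq]
  exact hBout hvB
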